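/- arXiv:1403.5687 — 3 statements merged into one kernel-verified Lean document; each statement's English description precedes it below -/
import Mathlib

section
/- For the loop percolation L_{α,κ} on ℤ^d with d ≥ 3, α > 0 and κ < 0, for any two distinct vertices x and y, μ_κ(ℓ : x, y ∈ ℓ) = ∞, and hence almost surely some loop of L_{α,κ} visits both x and y; in particular all of ℤ^d is covered by the loops through any fixed vertex. -/
open MeasureTheory

noncomputable section

/-- The vertex set of the integer lattice `ℤ^d`. -/
abbrev Vtx (d : ℕ) := Fin d → ℤ

/-- Transition matrix of simple random walk on `ℤ^d`. -/
def Qd (d : ℕ) (x y : Vtx d) : ℝ :=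
  if (∑ i, (x i - y i).natAbs) = 1 then (2 * (d : ℝ))⁻¹ else 0

/-- `n`-step transition probabilities of simple random walk on `ℤ^d`. -/
def stepP (d : ℕ) : ℕ → Vtx d → Vtx d → ℝ
  | 0 => fun x y => if x = y then 1 else 0
  | n + 1 => fun x y => ∑' z, Qd d x z * stepP d n z y

/-- Green function of simple random walk on `ℤ^d`: `G(x,y) = ∑_{n≥0} P^x[X_n = y]`. -/
def green (d : ℕ) (x y : Vtx d) : ℝ := ∑' n, stepP d n x y

/-- A nontrivial discrete based loop: a list `(x_1,…,x_n)`, `n ≥ 2`, with cyclically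
consecutive entries distinct (`x_1 ≠ x_2, …, x_n ≠ x_1`). -/
def IsLoop {d : ℕ} (l : List (Vtx d)) : Prop :=
  2 ≤ l.length ∧ ∀ i < l.length, l.getD i 0 ≠ l.getD ((i + 1) % l.length) 0

/-- Weight of a based loop under the loop measure `μ̇` (with `κ = 0`):
`(1/n) Q^{x_1}_{x_2} ⋯ Q^{x_n}_{x_1}`. -/
def loopWeight (d : ℕ) (l : List (Vtx d)) : ℝ :=
  (l.length : ℝ)⁻¹ *
    ∏ i ∈ Finset.range l.length, Qd d (l.getD i 0) (l.getD ((i + 1) % l.length) 0)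

end

noncomputable section

/-- Weight of a based loop under `μ̇_κ` on `ℤ^d`: extra killing factor `(1/(1+κ))^n`. -/
def loopWeightK (d : ℕ) (κ : ℝ) (l : List (Vtx d)) : ℝ :=
  ((1 + κ)⁻¹) ^ l.length * loopWeight d l

/-- `L` is a Poisson loop ensemble with intensity `α μ̇_κ` on `ℤ^d`. -/
def IsPoissonLoopSoupK (d : ℕ) (κ : ℝ) {Ω : Type*} [MeasurableSpace Ω] (P : Measure Ω)
    (α : ℝ) (L : Ω → List (Vtx d) → ℕ) : Prop :=
  (∀ l, Measurable fun ω => L ω l) ∧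
  ProbabilityTheory.iIndepFun (fun l ω => L ω l) P ∧
  (∀ l, IsLoop l → ∀ n : ℕ,
    P {ω | L ω l = n} = ENNReal.ofReal
      (Real.exp (-(α * loopWeightK d κ l)) * (α * loopWeightK d κ l) ^ n /
        (Nat.factorial n : ℝ))) ∧
  (∀ l, ¬ IsLoop l → ∀ ω, L ω l = 0)

namespace NK
open scoped ENNReal

variable {d : ℕ}

/-- unit vector predicate -/
def Unit1 {d : ℕ} (v : Vtx d) : Prop := (∑ i, (v i).natAbs) = 1

def stepv (d : ℕ) (e : Fin d × Bool) : Vtx d :=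
  fun j => if j = e.1 then (if e.2 then 1 else -1) else 0

lemma stepv_unit (e : Fin d × Bool) : Unit1 (stepv d e) := by
  unfold Unit1 stepv
  rw [Finset.sum_eq_single e.1]
  · cases e.2 <;> simp
  · intro b _ hb; simp [hb]
  · simp

lemma stepv_injective : Function.Injective (stepv d) := by
  rintro ⟨e1, e2⟩ ⟨f1, f2⟩ h
  have h1 := congrFun h e1
  simp only [stepv, if_pos rfl] at h1
  by_cases hef : e1 = f1
  · subst hef
    simp only [if_pos rfl] at h1
    cases e2 <;> cases f2 <;> simp_all
  · rw [if_neg (fun hh => hef hh)] at h1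
    cases e2 <;> cases f2 <;> simp_all

lemma unit_neg {v : Vtx d} (h : Unit1 v) : Unit1 (-v) := by
  unfold Unit1 at *
  simpa [Int.natAbs_neg] using h

/-- positions of a walk -/
def pos (x : Vtx d) (σ : ℕ → Vtx d) (i : ℕ) : Vtx d := x + ∑ j ∈ Finset.range i, σ j

@[simp] lemma pos_zero (x : Vtx d) (σ : ℕ → Vtx d) : pos x σ 0 = x := by simp [pos]

lemma pos_succ (x : Vtx d) (σ : ℕ → Vtx d) (i : ℕ) :
    pos x σ (i + 1) = pos x σ i + σ i := by
  simp [pos, Finset.sum_range_succ, add_assoc]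

def loopOf (x : Vtx d) (σ : ℕ → Vtx d) (n : ℕ) : List (Vtx d) :=
  List.ofFn (fun i : Fin n => pos x σ i)

@[simp] lemma loopOf_length (x : Vtx d) (σ : ℕ → Vtx d) (n : ℕ) :
    (loopOf x σ n).length = n := by simp [loopOf]

lemma loopOf_getD (x : Vtx d) (σ : ℕ → Vtx d) (n i : ℕ) (hi : i < n) :
    (loopOf x σ n).getD i 0 = pos x σ i := by
  rw [List.getD_eq_getElem _ _ (by simpa using hi)]
  simp [loopOf]

lemma loopOf_adj (x : Vtx d) (σ : ℕ → Vtx d) (n : ℕ) (hn : 2 ≤ n)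
    (hu : ∀ j < n, Unit1 (σ j)) (hsum : ∑ j ∈ Finset.range n, σ j = 0)
    (i : ℕ) (hi : i < n) :
    (∑ i', ((loopOf x σ n).getD i 0 i' - (loopOf x σ n).getD ((i + 1) % n) 0 i').natAbs) = 1 := by
  have hnext : (loopOf x σ n).getD ((i + 1) % n) 0 = pos x σ i + σ i := by
    rcases Nat.lt_or_ge (i+1) n with h | h
    · rw [Nat.mod_eq_of_lt h, loopOf_getD _ _ _ _ h, pos_succ]
    · have hin : i = n - 1 := by omega
      have : (i + 1) % n = 0 := by
        subst hin
        rw [Nat.sub_add_cancel (by omega), Nat.mod_self]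
      rw [this, loopOf_getD _ _ _ _ (by omega), pos_zero]
      have : pos x σ (i + 1) = x := by
        have h1 : i + 1 = n := by omega
        rw [h1]; simp [pos, hsum]
      rw [← pos_succ]
      exact this.symm
  rw [hnext, loopOf_getD _ _ _ _ hi]
  have : ∀ i', (pos x σ i i' - (pos x σ i + σ i) i').natAbs = ((σ i) i').natAbs := by
    intro i'
    simp only [Pi.add_apply]
    omega
  rw [Finset.sum_congr rfl fun i' _ => this i']
  exact hu i hi

lemma loopOf_isLoop (x : Vtx d) (σ : ℕ → Vtx d) (n : ℕ) (hn : 2 ≤ n)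
    (hu : ∀ j < n, Unit1 (σ j)) (hsum : ∑ j ∈ Finset.range n, σ j = 0) :
    IsLoop (loopOf x σ n) := by
  constructor
  · simpa using hn
  · intro i hi
    rw [loopOf_length] at hi
    intro heq
    have h2 := loopOf_adj x σ n hn hu hsum i hi
    simp only [loopOf_length] at heq
    rw [heq] at h2
    simp at h2

lemma loopOf_weight (x : Vtx d) (σ : ℕ → Vtx d) (n : ℕ) (hn : 2 ≤ n)
    (hu : ∀ j < n, Unit1 (σ j)) (hsum : ∑ j ∈ Finset.range n, σ j = 0) :
    loopWeight d (loopOf x σ n) = (n : ℝ)⁻¹ * ((2 * (d:ℝ))⁻¹) ^ n := by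
  unfold loopWeight
  rw [loopOf_length]
  congr 1
  rw [Finset.prod_congr rfl (fun i hi => ?_), Finset.prod_const, Finset.card_range]
  rw [Finset.mem_range] at hi
  unfold Qd
  rw [if_pos (loopOf_adj x σ n hn hu hsum i (by simpa using hi) |>.symm ▸ rfl)]

lemma loopOf_mem (x : Vtx d) (σ : ℕ → Vtx d) (n i : ℕ) (hi : i < n) :
    pos x σ i ∈ loopOf x σ n := by
  rw [loopOf, List.mem_ofFn]
  exact ⟨⟨i, hi⟩, rfl⟩

/-- helper: sum over shifted range -/
lemma sum_range_add' {M : Type*} [AddCommMonoid M] (f : ℕ → M) (m n : ℕ) :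
    ∑ j ∈ Finset.range (m + n), f j =
      (∑ j ∈ Finset.range m, f j) + ∑ j ∈ Finset.range n, f (m + j) := by
  induction n with
  | zero => simp
  | succ n ih => rw [← Nat.add_assoc, Finset.sum_range_succ, ih, Finset.sum_range_succ, add_assoc]

lemma exists_unit_steps_aux : ∀ (n : ℕ) (x y : Vtx d),
    (∑ i, (x i - y i).natAbs) = n → 1 ≤ n →
    ∃ δ : ℕ → Vtx d, (∀ j < n, Unit1 (δ j)) ∧ ∑ j ∈ Finset.range n, δ j = y - x := by
  intro n
  induction n with
  | zero => omega
  | succ n ih =>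
    intro x y hxy _
    rcases Nat.eq_zero_or_pos n with hn | hn
    · subst hn
      refine ⟨fun _ => y - x, fun j _ => ?_, by simp⟩
      unfold Unit1
      calc (∑ i, ((y - x) i).natAbs) = ∑ i, (x i - y i).natAbs := by
            apply Finset.sum_congr rfl; intro i _; simp only [Pi.sub_apply]; omega
        _ = 1 := hxy
    · -- pick a coordinate where x ≠ y
      have hne : ∃ i, x i ≠ y i := by
        by_contra hc
        push_neg at hc
        have : (∑ i, (x i - y i).natAbs) = 0 := by
          apply Finset.sum_eq_zero; intro i _; rw [hc i]; simp
        omega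
      obtain ⟨i₀, hi₀⟩ := hne
      set e : Vtx d := Function.update (0 : Vtx d) i₀ (if x i₀ < y i₀ then 1 else -1) with he
      have he_unit : Unit1 e := by
        unfold Unit1
        rw [Finset.sum_eq_single i₀]
        · rw [he]; simp only [Function.update_self]
          split <;> simp
        · intro b _ hb; rw [he]; simp [Function.update_of_ne hb]
        · simp
      have hdist : (∑ i, ((x + e) i - y i).natAbs) = n := by
        have h1 : ∀ i, i ≠ i₀ → ((x + e) i - y i).natAbs = (x i - y i).natAbs := by
          intro i hi; rw [he]; simp [Function.update_of_ne hi]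
        have h2 : ((x + e) i₀ - y i₀).natAbs = (x i₀ - y i₀).natAbs - 1 ∧
            1 ≤ (x i₀ - y i₀).natAbs := by
          rw [he]; simp only [Pi.add_apply, Function.update_self]
          constructor
          · split <;> omega
          · omega
        have := Finset.add_sum_erase Finset.univ (fun i => ((x + e) i - y i).natAbs)
          (Finset.mem_univ i₀)
        have h4 := Finset.add_sum_erase Finset.univ (fun i => (x i - y i).natAbs)
          (Finset.mem_univ i₀)
        have h5 : ∑ i ∈ Finset.univ.erase i₀, ((x + e) i - y i).natAbs
            = ∑ i ∈ Finset.univ.erase i₀, (x i - y i).natAbs := by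
          apply Finset.sum_congr rfl
          intro i hi
          exact h1 i (Finset.ne_of_mem_erase hi)
        beta_reduce at this h4
        omega
      obtain ⟨δ', hδ'u, hδ's⟩ := ih (x + e) y hdist hn
      refine ⟨fun j => if j < n then δ' j else e, fun j hj => ?_, ?_⟩
      · show Unit1 (if j < n then δ' j else e)
        split
        · exact hδ'u j (by omega)
        · exact he_unit
      · show (∑ j ∈ Finset.range (n+1), (if j < n then δ' j else e)) = y - x
        rw [Finset.sum_range_succ, if_neg (by omega)]
        have : ∑ j ∈ Finset.range n, (if j < n then δ' j else e)
            = ∑ j ∈ Finset.range n, δ' j := by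
          apply Finset.sum_congr rfl
          intro j hj
          rw [Finset.mem_range] at hj
          rw [if_pos hj]
        rw [this, hδ's]
        funext i
        simp only [Pi.add_apply, Pi.sub_apply]
        ring

lemma exists_unit_steps (x y : Vtx d) (hxy : x ≠ y) :
    ∃ a : ℕ, 1 ≤ a ∧ ∃ δ : ℕ → Vtx d, (∀ j < a, Unit1 (δ j)) ∧
      ∑ j ∈ Finset.range a, δ j = y - x := by
  refine ⟨∑ i, (x i - y i).natAbs, ?_, exists_unit_steps_aux _ x y rfl ?_⟩ <;>
  · by_contra hc
    push_neg at hc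
    apply hxy
    funext i
    have h0 : (∑ i, (x i - y i).natAbs) = 0 := by omega
    have := Finset.sum_eq_zero_iff.mp h0 i (Finset.mem_univ i)
    omega

section Family

variable (x y : Vtx d) (a : ℕ) (δ : ℕ → Vtx d)

/-- endpoint of a step sequence -/
def Esum (k : ℕ) (s : Fin k → Fin d × Bool) : Vtx d := ∑ j : Fin k, stepv d (s j)

/-- the steps of a family loop: `k` free steps, `k` reversed free steps, the path `x→y`,
and the reversed path. -/
def famSteps (k : ℕ) (s t : Fin k → Fin d × Bool) : ℕ → Vtx d :=
  fun j =>
    if h : j < k then stepv d (s ⟨j, h⟩)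
    else if h2 : j < 2 * k then - stepv d (t ⟨j - k, by omega⟩)
    else if j < 2 * k + a then δ (j - 2 * k)
    else - δ (j - (2 * k + a))

variable (ha : 1 ≤ a) (hδu : ∀ j < a, Unit1 (δ j))
  (hδs : ∑ j ∈ Finset.range a, δ j = y - x)

include ha hδu in
lemma famSteps_unit (k : ℕ) (s t : Fin k → Fin d × Bool) :
    ∀ j < 2 * k + 2 * a, Unit1 (famSteps a δ k s t j) := by
  intro j hj
  unfold famSteps
  split
  · exact stepv_unit _
  · split
    · exact unit_neg (stepv_unit _)
    · split
      · exact hδu _ (by omega)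
      · exact unit_neg (hδu _ (by omega))

include hδs in
lemma famSteps_sum (k : ℕ) (s t : Fin k → Fin d × Bool) :
    ∑ j ∈ Finset.range (2 * k + 2 * a), famSteps a δ k s t j
      = Esum k s - Esum k t := by
  have hsplit : 2 * k + 2 * a = k + (k + (a + a)) := by ring
  rw [hsplit, sum_range_add', sum_range_add', sum_range_add']
  have h1 : ∑ j ∈ Finset.range k, famSteps a δ k s t j = Esum k s := by
    rw [Finset.sum_range fun j => famSteps a δ k s t j]
    apply Finset.sum_congr rfl
    intro j _
    unfold famSteps
    rw [dif_pos j.isLt]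
  have h2 : ∑ j ∈ Finset.range k, famSteps a δ k s t (k + j) = - Esum k t := by
    simp only [Esum, ← Finset.sum_neg_distrib]
    rw [Finset.sum_range fun j => famSteps a δ k s t (k + j)]
    apply Finset.sum_congr rfl
    intro j _
    unfold famSteps
    rw [dif_neg (by omega), dif_pos (by omega)]
    have hidx : k + (j : ℕ) - k = (j : ℕ) := by omega
    simp only [hidx, Fin.eta]
  have h3 : ∑ j ∈ Finset.range a, famSteps a δ k s t (k + (k + j)) = y - x := by
    rw [← hδs]
    apply Finset.sum_congr rfl
    intro j hj
    rw [Finset.mem_range] at hj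
    unfold famSteps
    rw [dif_neg (by omega), dif_neg (by omega), if_pos (by omega),
      show k + (k + j) - 2 * k = j from by omega]
  have h4 : ∑ j ∈ Finset.range a, famSteps a δ k s t (k + (k + (a + j))) = -(y - x) := by
    rw [← hδs, ← Finset.sum_neg_distrib]
    apply Finset.sum_congr rfl
    intro j hj
    rw [Finset.mem_range] at hj
    unfold famSteps
    rw [dif_neg (by omega), dif_neg (by omega), if_neg (by omega),
      show k + (k + (a + j)) - (2 * k + a) = j from by omega]
  rw [h1, h2, h3, h4]
  abel

include ha hδs in
lemma famSteps_sum_mid (k : ℕ) (s t : Fin k → Fin d × Bool) :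
    ∑ j ∈ Finset.range (2 * k + a), famSteps a δ k s t j
      = Esum k s - Esum k t + (y - x) := by
  have hsplit : 2 * k + a = k + (k + a) := by ring
  rw [hsplit, sum_range_add', sum_range_add']
  have h1 : ∑ j ∈ Finset.range k, famSteps a δ k s t j = Esum k s := by
    rw [Finset.sum_range fun j => famSteps a δ k s t j]
    apply Finset.sum_congr rfl
    intro j _
    unfold famSteps
    rw [dif_pos j.isLt]
  have h2 : ∑ j ∈ Finset.range k, famSteps a δ k s t (k + j) = - Esum k t := by
    simp only [Esum, ← Finset.sum_neg_distrib]
    rw [Finset.sum_range fun j => famSteps a δ k s t (k + j)]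
    apply Finset.sum_congr rfl
    intro j _
    unfold famSteps
    rw [dif_neg (by omega), dif_pos (by omega)]
    have hidx : k + (j : ℕ) - k = (j : ℕ) := by omega
    simp only [hidx, Fin.eta]
  have h3 : ∑ j ∈ Finset.range a, famSteps a δ k s t (k + (k + j)) = y - x := by
    rw [← hδs]
    apply Finset.sum_congr rfl
    intro j hj
    rw [Finset.mem_range] at hj
    unfold famSteps
    rw [dif_neg (by omega), dif_neg (by omega), if_pos (by omega),
      show k + (k + j) - 2 * k = j from by omega]
  rw [h1, h2, h3]
  abel

/-- the loop associated to parameters `(k, s, t)` -/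
def famLoop (k : ℕ) (s t : Fin k → Fin d × Bool) : List (Vtx d) :=
  loopOf x (famSteps a δ k s t) (2 * k + 2 * a)

variable {x y a δ}

include ha hδu hδs in
lemma famLoop_spec (k : ℕ) (s t : Fin k → Fin d × Bool) (hE : Esum k s = Esum k t) :
    IsLoop (famLoop x a δ k s t) ∧ x ∈ famLoop x a δ k s t ∧ y ∈ famLoop x a δ k s t ∧
      loopWeight d (famLoop x a δ k s t)
        = ((2 * k + 2 * a : ℕ) : ℝ)⁻¹ * ((2 * (d:ℝ))⁻¹) ^ (2 * k + 2 * a) ∧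
      (famLoop x a δ k s t).length = 2 * k + 2 * a := by
  have hn : 2 ≤ 2 * k + 2 * a := by omega
  have hsum : ∑ j ∈ Finset.range (2 * k + 2 * a), famSteps a δ k s t j = 0 := by
    rw [famSteps_sum x y a δ hδs, hE, sub_self]
  refine ⟨loopOf_isLoop _ _ _ hn (famSteps_unit a δ ha hδu k s t) hsum, ?_, ?_,
    loopOf_weight _ _ _ hn (famSteps_unit a δ ha hδu k s t) hsum, loopOf_length _ _ _⟩
  · have := loopOf_mem x (famSteps a δ k s t) (2 * k + 2 * a) 0 (by omega)
    simpa [famLoop] using this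
  · have hmem := loopOf_mem x (famSteps a δ k s t) (2 * k + 2 * a) (2 * k + a) (by omega)
    have : pos x (famSteps a δ k s t) (2 * k + a) = y := by
      unfold pos
      rw [famSteps_sum_mid x y a δ ha hδs, hE, sub_self]
      funext i
      simp
    rwa [this] at hmem

include ha in
lemma famLoop_inj (k k' : ℕ) (s t : Fin k → Fin d × Bool) (s' t' : Fin k' → Fin d × Bool)
    (h : famLoop x a δ k s t = famLoop x a δ k' s' t') :
    k = k' ∧ HEq (s, t) (s', t') := by
  have hlen : 2 * k + 2 * a = 2 * k' + 2 * a := by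
    have := congrArg List.length h
    simpa [famLoop] using this
  have hkk : k = k' := by omega
  subst hkk
  refine ⟨rfl, heq_of_eq ?_⟩
  have hpos : ∀ i < 2 * k + 2 * a,
      pos x (famSteps a δ k s t) i = pos x (famSteps a δ k s' t') i := by
    intro i hi
    have h1 := loopOf_getD x (famSteps a δ k s t) (2 * k + 2 * a) i hi
    have h2 := loopOf_getD x (famSteps a δ k s' t') (2 * k + 2 * a) i hi
    rw [← h1, ← h2]
    unfold famLoop at h
    rw [h]
  have hstep : ∀ j, j + 1 < 2 * k + 2 * a →
      famSteps a δ k s t j = famSteps a δ k s' t' j := by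
    intro j hj
    have e1 := pos_succ x (famSteps a δ k s t) j
    have e2 := pos_succ x (famSteps a δ k s' t') j
    have p1 := hpos j (by omega)
    have p2 := hpos (j + 1) hj
    rw [e1, e2, p1] at p2
    exact (add_left_cancel p2)
  have hs : s = s' := by
    funext j
    have := hstep j (by omega)
    unfold famSteps at this
    rw [dif_pos j.isLt, dif_pos j.isLt] at this
    have := stepv_injective this
    simpa using this
  have ht : t = t' := by
    funext j
    have := hstep (k + j) (by omega)
    unfold famSteps at this
    rw [dif_neg (by omega), dif_pos (by omega), dif_neg (by omega), dif_pos (by omega)] at this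
    have h3 := stepv_injective (neg_injective this)
    have hidx : k + (j : ℕ) - k = (j : ℕ) := by omega
    simp only [hidx, Fin.eta] at h3
    exact h3
  rw [hs, ht]

end Family

section Count

/-- parameter space for the loop family at stage `k` -/
def Param (d k : ℕ) :=
  {p : (Fin k → Fin d × Bool) × (Fin k → Fin d × Bool) // Esum k p.1 = Esum k p.2}

instance (d k : ℕ) : Fintype (Param d k) := by unfold Param; infer_instance

lemma Esum_mem_box (d k : ℕ) (s : Fin k → Fin d × Bool) :
    Esum k s ∈ Fintype.piFinset (fun _ : Fin d => Finset.Icc (-(k:ℤ)) (k:ℤ)) := by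
  rw [Fintype.mem_piFinset]
  intro i
  rw [Finset.mem_Icc]
  have h1 : ∀ e : Fin d × Bool, -1 ≤ stepv d e i ∧ stepv d e i ≤ 1 := by
    intro e
    unfold stepv
    split
    · split <;> omega
    · omega
  have hE : Esum k s i = ∑ j : Fin k, stepv d (s j) i := by
    unfold Esum
    rw [Finset.sum_apply]
  constructor
  · rw [hE]
    calc -(k:ℤ) = ∑ _j : Fin k, (-1 : ℤ) := by simp
      _ ≤ _ := Finset.sum_le_sum fun j _ => (h1 (s j)).1
  · rw [hE]
    calc ∑ j : Fin k, stepv d (s j) i ≤ ∑ _j : Fin k, (1 : ℤ) :=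
        Finset.sum_le_sum fun j _ => (h1 (s j)).2
      _ = (k:ℤ) := by simp

lemma card_box (d k : ℕ) :
    (Fintype.piFinset (fun _ : Fin d => Finset.Icc (-(k:ℤ)) (k:ℤ))).card = (2*k+1)^d := by
  rw [Fintype.card_piFinset]
  have : (Finset.Icc (-(k:ℤ)) (k:ℤ)).card = 2*k+1 := by
    rw [Int.card_Icc]
    omega
  simp [this]

lemma card_param (d k : ℕ) :
    ((2*(d:ℝ)))^(2*k) ≤ ((2*(k:ℝ)+1))^d * (Fintype.card (Param d k)) := by
  classical
  set B := Fintype.piFinset (fun _ : Fin d => Finset.Icc (-(k:ℤ)) (k:ℤ)) with hB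
  set N : Vtx d → ℕ := fun z =>
    (Finset.univ.filter fun s : Fin k → Fin d × Bool => Esum k s = z).card with hN
  have hsumN : ∑ z ∈ B, N z = (2*d)^k := by
    rw [hN, ← Finset.card_eq_sum_card_fiberwise (fun s _ => Esum_mem_box d k s)]
    rw [Finset.card_univ, Fintype.card_fun]
    simp [mul_comm]
  have hcardP : Fintype.card (Param d k) = ∑ z ∈ B, N z * N z := by
    rw [show Fintype.card (Param d k) = (Finset.univ.filter
        (fun p : (Fin k → Fin d × Bool) × (Fin k → Fin d × Bool) =>
          Esum k p.1 = Esum k p.2)).card from Fintype.card_subtype _]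
    rw [Finset.card_eq_sum_card_fiberwise
      (f := fun p : (Fin k → Fin d × Bool) × (Fin k → Fin d × Bool) => Esum k p.1)
      (fun p _ => Esum_mem_box d k p.1)]
    apply Finset.sum_congr rfl
    intro z _
    rw [Finset.filter_filter]
    have hset : (Finset.univ.filter
        (fun p : (Fin k → Fin d × Bool) × (Fin k → Fin d × Bool) =>
          Esum k p.1 = Esum k p.2 ∧ Esum k p.1 = z))
        = (Finset.univ.filter fun s => Esum k s = z) ×ˢ
          (Finset.univ.filter fun s => Esum k s = z) := by
      ext p
      simp only [Finset.mem_filter, Finset.mem_univ, true_and, Finset.mem_product]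
      constructor
      · rintro ⟨h1, h2⟩; exact ⟨h2, h1 ▸ h2⟩
      · rintro ⟨h1, h2⟩; exact ⟨h1.trans h2.symm, h1⟩
    rw [hset, Finset.card_product]
  -- Cauchy-Schwarz
  have hcs := sq_sum_le_card_mul_sum_sq (s := B) (f := fun z => (N z : ℝ))
  rw [← Nat.cast_sum] at hcs
  rw [hsumN] at hcs
  have hBcard : (B.card : ℝ) = ((2*(k:ℝ)+1))^d := by
    rw [hB, card_box]
    push_cast
    ring
  calc ((2*(d:ℝ)))^(2*k) = (((2*d)^k : ℕ) : ℝ)^2 := by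
        push_cast
        rw [← pow_mul, mul_comm k 2]
      _ ≤ (B.card : ℝ) * ∑ z ∈ B, ((N z : ℝ))^2 := hcs
      _ = ((2*(k:ℝ)+1))^d * (Fintype.card (Param d k)) := by
        rw [hBcard, hcardP]
        congr 1
        rw [Nat.cast_sum]
        apply Finset.sum_congr rfl
        intro z _
        push_cast
        ring

end Count

section Analysis

open Filter

lemma eventually_poly_le (D A : ℕ) (C : ℝ) (hC : 0 < C) (P : ℝ) (hP : 1 < P) :
    ∀ᶠ k : ℕ in atTop, C * (2*(k:ℝ)+1)^D * (2*(k:ℝ)+2*(A:ℝ)) ≤ P^k := by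
  have hP0 : (0:ℝ) < P := lt_trans one_pos hP
  have ht := tendsto_pow_const_div_const_pow_of_one_lt (D+1) hP
  have hC' : (0:ℝ) < (C * 3^D * (2 + 2*(A:ℝ)))⁻¹ := by positivity
  filter_upwards [ht.eventually_le_const hC', eventually_ge_atTop 1] with k hk hk1
  have hk1' : (1:ℝ) ≤ (k:ℝ) := by exact_mod_cast hk1
  have h1 : (2*(k:ℝ)+1)^D ≤ 3^D * (k:ℝ)^D := by
    rw [← mul_pow]
    apply pow_le_pow_left₀ (by positivity)
    nlinarith
  have h2 : (2*(k:ℝ)+2*(A:ℝ)) ≤ (2 + 2*(A:ℝ)) * (k:ℝ) := by nlinarith [Nat.cast_nonneg (α := ℝ) A]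
  have h3 : C * (2*(k:ℝ)+1)^D * (2*(k:ℝ)+2*(A:ℝ))
      ≤ (C * 3^D * (2 + 2*(A:ℝ))) * (k:ℝ)^(D+1) := by
    have := mul_le_mul (mul_le_mul_of_nonneg_left h1 (le_of_lt hC)) h2 (by positivity)
      (by positivity)
    calc C * (2*(k:ℝ)+1)^D * (2*(k:ℝ)+2*(A:ℝ)) ≤ C * (3^D * (k:ℝ)^D) * ((2 + 2*(A:ℝ)) * (k:ℝ)) :=
          this
      _ = (C * 3^D * (2 + 2*(A:ℝ))) * (k:ℝ)^(D+1) := by ring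
  refine h3.trans ?_
  have hq : (k:ℝ)^(D+1) / P^k ≤ (C * 3^D * (2 + 2*(A:ℝ)))⁻¹ := hk
  have hCC : (0:ℝ) < C * 3^D * (2 + 2*(A:ℝ)) := by positivity
  rw [div_le_iff₀ (by positivity)] at hq
  calc (C * 3^D * (2 + 2*(A:ℝ))) * (k:ℝ)^(D+1)
      ≤ (C * 3^D * (2 + 2*(A:ℝ))) * ((C * 3^D * (2 + 2*(A:ℝ)))⁻¹ * P^k) := by
        apply mul_le_mul_of_nonneg_left hq (le_of_lt hCC)
    _ = P^k := by field_simp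

end Analysis


lemma tsum_loops_top (d : ℕ) (hd : 0 < d) (κ : ℝ) (hκ1 : -1 < κ) (hκ0 : κ < 0)
    (x y : Vtx d) (hxy : x ≠ y) :
    (∑' l : {l : List (Vtx d) // IsLoop l ∧ x ∈ l ∧ y ∈ l},
        ENNReal.ofReal (loopWeightK d κ l.1)) = ⊤ := by
  classical
  obtain ⟨a, ha, δ, hδu, hδs⟩ := exists_unit_steps x y hxy
  set ρ : ℝ := (1 + κ)⁻¹ with hρdef
  have h01 : (0:ℝ) < 1 + κ := by linarith
  have h11 : 1 + κ < 1 := by linarith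
  have hρ : 1 < ρ := by
    rw [hρdef]
    rw [lt_inv_comm₀ one_pos h01]
    simpa using h11
  have hρ0 : (0:ℝ) < ρ := lt_trans one_pos hρ
  -- the injection from parameters to loops
  set S := {l : List (Vtx d) // IsLoop l ∧ x ∈ l ∧ y ∈ l} with hS
  have spec := fun (k : ℕ) (q : Param d k) =>
    famLoop_spec (x := x) (y := y) ha hδu hδs k q.1.1 q.1.2 q.2
  set ι : (Σ k : ℕ, Param d k) → S := fun p =>
    ⟨famLoop x a δ p.1 p.2.1.1 p.2.1.2,
      (spec p.1 p.2).1, (spec p.1 p.2).2.1, (spec p.1 p.2).2.2.1⟩ with hι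
  have hinj : Function.Injective ι := by
    rintro ⟨k, ⟨⟨s, t⟩, hE⟩⟩ ⟨k', ⟨⟨s', t'⟩, hE'⟩⟩ h
    rw [hι, Subtype.mk.injEq] at h
    obtain ⟨hk, hpair⟩ := famLoop_inj ha k k' s t s' t' h
    subst hk
    have hpair' := eq_of_heq hpair
    rw [Prod.mk.injEq] at hpair'
    obtain ⟨hs, ht⟩ := hpair'
    subst hs; subst ht
    rfl
  -- weight of each family loop
  have hweight : ∀ (k : ℕ) (q : Param d k),
      ENNReal.ofReal (loopWeightK d κ (ι ⟨k, q⟩).1)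
        = ENNReal.ofReal (ρ ^ (2*k+2*a) * (((2*k+2*a : ℕ)):ℝ)⁻¹
            * ((2 * (d:ℝ))⁻¹) ^ (2*k+2*a)) := by
    intro k q
    have hsp := spec k q
    rw [hι]
    unfold loopWeightK
    rw [hsp.2.2.2.2, hsp.2.2.2.1, ← hρdef, mul_assoc]
  -- the ENNReal term at stage k
  set term : ℕ → ℝ≥0∞ := fun k =>
    (Fintype.card (Param d k) : ℝ≥0∞) * ENNReal.ofReal (ρ ^ (2*k+2*a)
      * (((2*k+2*a : ℕ)):ℝ)⁻¹ * ((2 * (d:ℝ))⁻¹) ^ (2*k+2*a)) with hterm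
  -- eventually each term is at least 1
  have hP : 1 < ρ^2 := by nlinarith
  have hev := eventually_poly_le d a ((2*(d:ℝ))^(2*a)) (by positivity) (ρ^2) hP
  obtain ⟨K, hK⟩ := Filter.eventually_atTop.mp hev
  have hterm1 : ∀ k, K ≤ k → 1 ≤ term k := by
    intro k hk
    have hEk := hK k hk
    set n : ℕ := 2*k+2*a with hn
    have hncast : ((n:ℕ):ℝ) = 2*(k:ℝ)+2*(a:ℝ) := by rw [hn]; push_cast; ring
    have hnpos : (0:ℝ) < (n:ℝ) := by rw [hncast]; positivity
    have hd0 : (0:ℝ) < 2*(d:ℝ) := by positivity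
    have hcard := card_param d k
    -- key : n * (2d)^n ≤ card * ρ^n
    have hkey2 : (2*(k:ℝ)+1)^d * ((n:ℝ) * (2*(d:ℝ))^n)
        ≤ (2*(k:ℝ)+1)^d * ((Fintype.card (Param d k) : ℝ) * ρ^n) := by
      have e1 : (2*(k:ℝ)+1)^d * ((n:ℝ) * (2*(d:ℝ))^n)
          = (2*(d:ℝ))^(2*k) * ((2*(d:ℝ))^(2*a) * (2*(k:ℝ)+1)^d * (n:ℝ)) := by
        rw [hn, pow_add]
        ring
      have e2 : (2*(d:ℝ))^(2*a) * (2*(k:ℝ)+1)^d * (n:ℝ) ≤ (ρ^2)^k := by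
        calc (2*(d:ℝ))^(2*a) * (2*(k:ℝ)+1)^d * (n:ℝ)
            = (2*(d:ℝ))^(2*a) * (2*(k:ℝ)+1)^d * (2*(k:ℝ)+2*(a:ℝ)) := by rw [hncast]
          _ ≤ (ρ^2)^k := hEk
      have e3 : ((ρ^2)^k : ℝ) ≤ ρ^n := by
        rw [← pow_mul]
        apply pow_le_pow_right₀ (le_of_lt hρ)
        omega
      calc (2*(k:ℝ)+1)^d * ((n:ℝ) * (2*(d:ℝ))^n)
          = (2*(d:ℝ))^(2*k) * ((2*(d:ℝ))^(2*a) * (2*(k:ℝ)+1)^d * (n:ℝ)) := e1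
        _ ≤ (2*(d:ℝ))^(2*k) * ρ^n := by
            apply mul_le_mul_of_nonneg_left (e2.trans e3) (by positivity)
        _ ≤ ((2*(k:ℝ)+1)^d * (Fintype.card (Param d k) : ℝ)) * ρ^n := by
            apply mul_le_mul_of_nonneg_right hcard (by positivity)
        _ = (2*(k:ℝ)+1)^d * ((Fintype.card (Param d k) : ℝ) * ρ^n) := by ring
    have hkey : (n:ℝ) * (2*(d:ℝ))^n ≤ (Fintype.card (Param d k) : ℝ) * ρ^n :=
      le_of_mul_le_mul_left hkey2 (by positivity)
    have hreal : 1 ≤ (Fintype.card (Param d k) : ℝ)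
        * (ρ ^ n * ((n:ℕ):ℝ)⁻¹ * ((2 * (d:ℝ))⁻¹) ^ n) := by
      have hrw : (Fintype.card (Param d k) : ℝ)
          * (ρ ^ n * ((n:ℕ):ℝ)⁻¹ * ((2 * (d:ℝ))⁻¹) ^ n)
          = ((Fintype.card (Param d k) : ℝ) * ρ^n) / ((n:ℝ) * (2*(d:ℝ))^n) := by
        rw [inv_pow, div_eq_mul_inv, mul_inv]
        ring_nf
        simp only [one_div]
      rw [hrw, le_div_iff₀ (by positivity), one_mul]
      exact hkey
    rw [hterm]
    calc (1:ℝ≥0∞) = ENNReal.ofReal 1 := by simp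
      _ ≤ ENNReal.ofReal ((Fintype.card (Param d k) : ℝ)
            * (ρ ^ n * ((n:ℕ):ℝ)⁻¹ * ((2 * (d:ℝ))⁻¹) ^ n)) := ENNReal.ofReal_le_ofReal hreal
      _ = (Fintype.card (Param d k) : ℝ≥0∞)
            * ENNReal.ofReal (ρ ^ n * ((n:ℕ):ℝ)⁻¹ * ((2 * (d:ℝ))⁻¹) ^ n) := by
          rw [ENNReal.ofReal_mul (by positivity), ENNReal.ofReal_natCast]
  -- assemble
  apply top_le_iff.mp
  calc (⊤ : ℝ≥0∞) = ∑' _ : ℕ, (1:ℝ≥0∞) :=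
        (ENNReal.tsum_const_eq_top_of_ne_zero one_ne_zero).symm
    _ ≤ ∑' k : ℕ, term (k + K) := ENNReal.tsum_le_tsum fun k => hterm1 (k + K) (by omega)
    _ ≤ ∑' k : ℕ, term k := ENNReal.tsum_comp_le_tsum_of_injective (add_left_injective K) term
    _ = ∑' p : (Σ k : ℕ, Param d k), ENNReal.ofReal (loopWeightK d κ (ι p).1) := by
        rw [ENNReal.tsum_sigma']
        apply tsum_congr
        intro k
        rw [tsum_fintype]
        rw [Finset.sum_congr rfl fun q _ => hweight k q, Finset.sum_const, Finset.card_univ,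
          nsmul_eq_mul, hterm]
    _ ≤ ∑' l : S, ENNReal.ofReal (loopWeightK d κ l.1) :=
        ENNReal.tsum_comp_le_tsum_of_injective hinj _

lemma loopWeightK_nonneg (d : ℕ) (κ : ℝ) (hκ1 : -1 < κ) (l : List (Vtx d)) :
    0 ≤ loopWeightK d κ l := by
  unfold loopWeightK loopWeight
  have h1 : (0:ℝ) ≤ (1 + κ)⁻¹ := inv_nonneg.mpr (by linarith)
  refine mul_nonneg (pow_nonneg h1 _)
    (mul_nonneg (by positivity) (Finset.prod_nonneg fun i _ => ?_))
  unfold Qd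
  split
  · positivity
  · exact le_rfl

lemma meas_event (d : ℕ) {Ω : Type*} [MeasurableSpace Ω]
    (L : Ω → List (Vtx d) → ℕ) (hm : ∀ l, Measurable fun ω => L ω l) (u v : Vtx d) :
    MeasurableSet {ω | ∃ l : List (Vtx d), 0 < L ω l ∧ u ∈ l ∧ v ∈ l} := by
  have : {ω | ∃ l : List (Vtx d), 0 < L ω l ∧ u ∈ l ∧ v ∈ l}
      = ⋃ (l : List (Vtx d)), ⋃ (_ : u ∈ l ∧ v ∈ l), {ω | L ω l ≠ 0} := by
    ext ω
    simp only [Set.mem_setOf_eq, Set.mem_iUnion]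
    constructor
    · rintro ⟨l, hl, h1, h2⟩; exact ⟨l, ⟨h1, h2⟩, Nat.pos_iff_ne_zero.mp hl⟩
    · rintro ⟨l, ⟨h1, h2⟩, hl⟩; exact ⟨l, Nat.pos_of_ne_zero hl, h1, h2⟩
  rw [this]
  apply MeasurableSet.iUnion
  intro l
  apply MeasurableSet.iUnion
  intro _
  exact (hm l) ((measurableSet_singleton 0).compl)

lemma prob_visits_one (d : ℕ) (κ α : ℝ) (hα : 0 < α) (hκ1 : -1 < κ)
    (u v : Vtx d)
    {Ω : Type*} [MeasurableSpace Ω] (P : Measure Ω) [IsProbabilityMeasure P]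
    (L : Ω → List (Vtx d) → ℕ) (hL : IsPoissonLoopSoupK d κ P α L)
    (htop : (∑' l : {l : List (Vtx d) // IsLoop l ∧ u ∈ l ∧ v ∈ l},
        ENNReal.ofReal (loopWeightK d κ l.1)) = ⊤) :
    P {ω | ∃ l : List (Vtx d), 0 < L ω l ∧ u ∈ l ∧ v ∈ l} = 1 := by
  classical
  set S := {l : List (Vtx d) // IsLoop l ∧ u ∈ l ∧ v ∈ l} with hS
  set w : List (Vtx d) → ℝ := loopWeightK d κ with hw
  have hw0 : ∀ l, 0 ≤ w l := loopWeightK_nonneg d κ hκ1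
  set A := {ω | ∃ l : List (Vtx d), 0 < L ω l ∧ u ∈ l ∧ v ∈ l} with hA
  have hmeasA : MeasurableSet A := meas_event d L hL.1 u v
  rw [← prob_compl_eq_zero_iff hmeasA]
  have hsub : Aᶜ ⊆ ⋂ (l : S), {ω | L ω l.1 = 0} := by
    intro ω hω
    simp only [Set.mem_iInter]
    rintro ⟨l, hl, h1, h2⟩
    simp only [hA, Set.mem_compl_iff, Set.mem_setOf_eq, not_exists] at hω
    show L ω l = 0
    by_contra hne0
    exact (hω l) ⟨Nat.pos_of_ne_zero hne0, h1, h2⟩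
  apply measure_mono_null hsub
  -- show the big intersection is null
  by_contra hne
  have hple : P (⋂ (l : S), {ω | L ω l.1 = 0}) ≠ ⊤ := measure_ne_top _ _
  set t : ℝ := (P (⋂ (l : S), {ω | L ω l.1 = 0})).toReal with ht
  have ht0 : 0 < t := ENNReal.toReal_pos hne hple
  -- bound by exp(-α M) for every finite subfamily
  have hbound : ∀ F : Finset S,
      P (⋂ (l : S), {ω | L ω l.1 = 0})
        ≤ ENNReal.ofReal (Real.exp (-(α * ∑ l ∈ F, w l.1))) := by
    intro F
    set G : Finset (List (Vtx d)) := F.image Subtype.val with hG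
    have hsub2 : (⋂ (l : S), {ω | L ω l.1 = 0})
        ⊆ ⋂ i ∈ G, (fun ω => L ω i) ⁻¹' {0} := by
      intro ω hω
      simp only [Set.mem_iInter]
      intro i hi
      rw [hG, Finset.mem_image] at hi
      obtain ⟨l, _, rfl⟩ := hi
      simp only [Set.mem_iInter] at hω
      exact hω l
    refine (measure_mono hsub2).trans ?_
    have hindep := hL.2.1.measure_inter_preimage_eq_mul (S := G)
      (sets := fun _ => ({0} : Set ℕ)) (fun i _ => measurableSet_singleton 0)
    rw [hindep]
    have hfac : ∀ i ∈ G, P ((fun ω => L ω i) ⁻¹' {0})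
        = ENNReal.ofReal (Real.exp (-(α * w i))) := by
      intro i hi
      rw [hG, Finset.mem_image] at hi
      obtain ⟨l, _, rfl⟩ := hi
      have := hL.2.2.1 l.1 l.2.1 0
      have heq : ((fun ω => L ω l.1) ⁻¹' {0}) = {ω | L ω l.1 = 0} := by
        ext ω; simp
      rw [heq, this]
      simp [hw]
    rw [Finset.prod_congr rfl hfac]
    rw [← ENNReal.ofReal_prod_of_nonneg (fun i _ => (Real.exp_pos _).le)]
    apply ENNReal.ofReal_le_ofReal
    rw [← Real.exp_sum]
    apply Real.exp_le_exp.mpr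
    rw [hG, Finset.sum_image (fun a _ b _ h => Subtype.val_injective h)]
    apply le_of_eq
    rw [Finset.mul_sum, ← Finset.sum_neg_distrib]
  -- choose a finite subfamily with large total weight
  set M : ℝ := (1 - Real.log t) / α with hM
  have hM' : -(α * M) = Real.log t - 1 := by
    rw [hM]
    field_simp
    ring
  obtain ⟨F, hF⟩ : ∃ F : Finset S, ENNReal.ofReal M < ∑ l ∈ F, ENNReal.ofReal (w l.1) := by
    by_contra hcon
    push_neg at hcon
    have : (∑' l : S, ENNReal.ofReal (w l.1)) ≤ ENNReal.ofReal M := by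
      rw [ENNReal.tsum_eq_iSup_sum]
      exact iSup_le hcon
    rw [htop] at this
    exact (ENNReal.ofReal_ne_top (top_le_iff.mp this)).elim
  have hMF : M < ∑ l ∈ F, w l.1 := by
    by_contra hcon
    push_neg at hcon
    have : (∑ l ∈ F, ENNReal.ofReal (w l.1)) ≤ ENNReal.ofReal M := by
      rw [← ENNReal.ofReal_sum_of_nonneg (fun l _ => hw0 l.1)]
      exact ENNReal.ofReal_le_ofReal hcon
    exact absurd hF (not_lt.mpr this)
  have hfinal := hbound F
  have hexp : Real.exp (-(α * ∑ l ∈ F, w l.1)) < t := by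
    have h1 : -(α * ∑ l ∈ F, w l.1) ≤ -(α * M) := by nlinarith
    calc Real.exp (-(α * ∑ l ∈ F, w l.1)) ≤ Real.exp (-(α * M)) := Real.exp_le_exp.mpr h1
      _ = Real.exp (Real.log t - 1) := by rw [hM']
      _ = t * Real.exp (-1) := by
          rw [show Real.log t - 1 = Real.log t + (-1) from by ring, Real.exp_add,
            Real.exp_log ht0]
      _ < t := by
          have hlt : Real.exp (-1) < 1 := by
            rw [← Real.exp_zero]
            exact Real.exp_lt_exp.mpr (by norm_num)
          exact mul_lt_of_lt_one_right ht0 hlt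
  have : P (⋂ (l : S), {ω | L ω l.1 = 0}) < P (⋂ (l : S), {ω | L ω l.1 = 0}) := by
    calc P (⋂ (l : S), {ω | L ω l.1 = 0})
        ≤ ENNReal.ofReal (Real.exp (-(α * ∑ l ∈ F, w l.1))) := hfinal
      _ < ENNReal.ofReal t := ENNReal.ofReal_lt_ofReal_iff ht0 |>.mpr hexp
      _ = P (⋂ (l : S), {ω | L ω l.1 = 0}) := by rw [ht, ENNReal.ofReal_toReal hple]
  exact absurd this (lt_irrefl _)

end NK

/-- For loop percolation on `ℤ^d`, `d ≥ 3`, with `α > 0` and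
`−1 < κ < 0`: for any two distinct vertices `x ≠ y`, `μ_κ(ℓ : x,y ∈ ℓ) = ∞`; hence almost
surely some loop of `L_{α,κ}` visits both `x` and `y`, and in particular almost surely all of
`ℤ^d` is covered by the loops passing through any fixed vertex `x`. -/
theorem negative_kappa_loops_cover (d : ℕ) (hd : 3 ≤ d) (α κ : ℝ) (hα : 0 < α)
    (hκ1 : -1 < κ) (hκ0 : κ < 0)
    (x y : Vtx d) (hxy : x ≠ y)
    {Ω : Type*} [MeasurableSpace Ω] (P : Measure Ω) [IsProbabilityMeasure P]
    (L : Ω → List (Vtx d) → ℕ) (hL : IsPoissonLoopSoupK d κ P α L) :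
    (∑' l : {l : List (Vtx d) // IsLoop l ∧ x ∈ l ∧ y ∈ l},
        ENNReal.ofReal (loopWeightK d κ l.1)) = ⊤ ∧
    P {ω | ∃ l : List (Vtx d), 0 < L ω l ∧ x ∈ l ∧ y ∈ l} = 1 ∧
    P {ω | ∀ z : Vtx d, ∃ l : List (Vtx d), 0 < L ω l ∧ x ∈ l ∧ z ∈ l} = 1 := by
  have hd0 : 0 < d := by omega
  have h1 := NK.tsum_loops_top d hd0 κ hκ1 hκ0 x y hxy
  refine ⟨h1, NK.prob_visits_one d κ α hα hκ1 x y P L hL h1, ?_⟩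
  have hAz : ∀ z : Vtx d, P {ω | ∃ l, 0 < L ω l ∧ x ∈ l ∧ z ∈ l} = 1 := by
    intro z
    by_cases hz : x = z
    · subst hz
      have h2 := NK.prob_visits_one d κ α hα hκ1 x y P L hL h1
      refine le_antisymm prob_le_one ?_
      rw [← h2]
      apply measure_mono
      rintro ω ⟨l, hl, hxl, _⟩
      exact ⟨l, hl, hxl, hxl⟩
    · exact NK.prob_visits_one d κ α hα hκ1 x z P L hL
        (NK.tsum_loops_top d hd0 κ hκ1 hκ0 x z hz)
  have hset : {ω | ∀ z : Vtx d, ∃ l, 0 < L ω l ∧ x ∈ l ∧ z ∈ l}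
      = ⋂ z : Vtx d, {ω | ∃ l, 0 < L ω l ∧ x ∈ l ∧ z ∈ l} := by
    ext ω
    simp only [Set.mem_setOf_eq, Set.mem_iInter]
  rw [hset]
  have hmeas : ∀ z : Vtx d, MeasurableSet {ω | ∃ l, 0 < L ω l ∧ x ∈ l ∧ z ∈ l} :=
    fun z => NK.meas_event d L hL.1 x z
  rw [← prob_compl_eq_zero_iff (MeasurableSet.iInter hmeas), Set.compl_iInter]
  refine measure_iUnion_null fun z => ?_
  rw [prob_compl_eq_zero_iff (hmeas z)]
  exact hAz z

end
end

section
/- For the Poisson loop ensemble L_α associated with simple random walk on ℤ^d (κ = 0), for every α > 0 and every tail event A (i.e. A measurable with respect to loops avoiding K, for every finite K ⊆ ℤ^d), P[A] ∈ {0,1}. -/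
open MeasureTheory

noncomputable section

/-- `L` is a Poisson loop ensemble with intensity `α μ̇` (κ = 0): the multiplicities of the
based loops are independent, Poisson distributed with parameter `α` times the loop weight,
and vanish off the set of nontrivial loops.  (On the countable space of loops this
characterizes the Poisson random measure with intensity `α μ̇`; its pushforward to unrooted
loops is the Poisson ensemble `L_α` with intensity `α μ`.) -/
def IsPoissonLoopSoup (d : ℕ) {Ω : Type*} [MeasurableSpace Ω] (P : Measure Ω)
    (α : ℝ) (L : Ω → List (Vtx d) → ℕ) : Prop :=
  (∀ l, Measurable fun ω => L ω l) ∧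
  ProbabilityTheory.iIndepFun (fun l ω => L ω l) P ∧
  (∀ l, IsLoop l → ∀ n : ℕ,
    P {ω | L ω l = n} = ENNReal.ofReal
      (Real.exp (-(α * loopWeight d l)) * (α * loopWeight d l) ^ n / (Nat.factorial n : ℝ))) ∧
  (∀ l, ¬ IsLoop l → ∀ ω, L ω l = 0)

end

noncomputable section

/-- For the Poisson loop ensemble `L_α` on `ℤ^d` (κ = 0), every tail event
— an event measurable, for every finite `K ⊆ ℤ^d`, with respect to the configuration of
loops avoiding `K` — has probability `0` or `1`. -/
theorem loop_soup_zero_one_law (d : ℕ) (hd : 3 ≤ d) (α : ℝ) (hα : 0 < α)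
    {Ω : Type*} [MeasurableSpace Ω] (P : Measure Ω) [IsProbabilityMeasure P]
    (L : Ω → List (Vtx d) → ℕ) (hL : IsPoissonLoopSoup d P α L)
    (A : Set Ω)
    (hA : ∀ K : Finset (Vtx d),
      MeasurableSet[MeasurableSpace.comap
        (fun ω => fun l : {l : List (Vtx d) // ∀ v ∈ l, v ∉ K} => L ω l.1)
        (inferInstance : MeasurableSpace ({l : List (Vtx d) // ∀ v ∈ l, v ∉ K} → ℕ))] A) :
    P A = 0 ∨ P A = 1 := by
  classical
  obtain ⟨hmeas, hindep, _hpois, hzero⟩ := hL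
  set s : List (Vtx d) → MeasurableSpace Ω :=
    fun l => MeasurableSpace.comap (fun ω => L ω l) inferInstance with hs
  have h_le : ∀ l, s l ≤ ‹MeasurableSpace Ω› := fun l => (hmeas l).comap_le
  have h_indep : ProbabilityTheory.iIndep s P := hindep.iIndep
  have h_tail : MeasurableSet[Filter.limsup s Filter.cofinite] A := by
    rw [Filter.limsup_eq, MeasurableSpace.measurableSet_sInf]
    rintro m hm
    simp only [Set.mem_setOf_eq] at hm
    have hfin : {l : List (Vtx d) | ¬ s l ≤ m}.Finite := by
      simpa [Filter.eventually_cofinite] using hm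
    set K : Finset (Vtx d) := hfin.toFinset.biUnion (fun l => l.toFinset) with hK
    have hcomap : MeasurableSpace.comap
        (fun ω => fun l : {l : List (Vtx d) // ∀ v ∈ l, v ∉ K} => L ω l.1)
        (inferInstance : MeasurableSpace ({l : List (Vtx d) // ∀ v ∈ l, v ∉ K} → ℕ))
        = ⨆ i : {l : List (Vtx d) // ∀ v ∈ l, v ∉ K}, s i.1 := by
      show MeasurableSpace.comap _ MeasurableSpace.pi = _
      rw [MeasurableSpace.pi, MeasurableSpace.comap_iSup]
      congr 1
      funext i
      rw [MeasurableSpace.comap_comp]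
      rfl
    have hAK := hA K
    rw [hcomap] at hAK
    have hsup : (⨆ i : {l : List (Vtx d) // ∀ v ∈ l, v ∉ K}, s i.1) ≤ m := by
      refine iSup_le fun i => ?_
      by_cases hi : s i.1 ≤ m
      · exact hi
      · -- i.1 must be the empty list
        have hiS : i.1 ∈ hfin.toFinset := by
          rw [Set.Finite.mem_toFinset]; exact hi
        have hnil : i.1 = [] := by
          rcases List.eq_nil_or_concat i.1 with h | ⟨l', v, hv⟩
          · exact h
          · exfalso
            have hvmem : v ∈ i.1 := by rw [hv]; simp
            have : v ∈ K := by
              rw [hK]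
              exact Finset.mem_biUnion.2 ⟨i.1, hiS, List.mem_toFinset.2 hvmem⟩
            exact i.2 v hvmem this
        have : s i.1 = ⊥ := by
          have hconst : (fun ω => L ω i.1) = fun _ => 0 := by
            funext ω
            exact hzero i.1 (by rw [hnil]; exact fun h => by simp [IsLoop] at h) ω
          rw [hs]
          simp only [hconst]
          exact MeasurableSpace.comap_const 0
        rw [this]; exact bot_le
    exact hsup _ hAK
  refine ProbabilityTheory.measure_zero_or_one_of_measurableSet_limsup
    (p := fun t : Set (List (Vtx d)) => t.Finite)
    (ns := fun F : Finset (List (Vtx d)) => (F : Set (List (Vtx d))))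
    h_le h_indep ?_ ?_ ?_ ?_ h_tail
  · intro t ht
    rw [Filter.mem_cofinite, compl_compl]; exact ht
  · intro F G
    exact ⟨F ∪ G, fun x hx => by simp at hx ⊢; exact Or.inl hx,
      fun x hx => by simp at hx ⊢; exact Or.inr hx⟩
  · intro F; exact F.finite_toSet
  · intro l; exact ⟨{l}, by simp⟩

end
end

section
/- The Poisson loop ensemble on ℤ^d associated with simple random walk is invariant under lattice translations and ergodic with respect to the group of lattice shifts. -/
open MeasureTheory

noncomputable section

/-- The lattice shift `t_x` acting on loop configurations: the shifted configuration gives a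
loop `l` the multiplicity that the original configuration gives `l − x`. -/
def shiftConfig (d : ℕ) (x : Vtx d) (c : List (Vtx d) → ℕ) : List (Vtx d) → ℕ :=
  fun l => c (l.map fun v => v - x)

namespace LoopAux
open scoped Classical
variable {d : ℕ} {Ω : Type*} [MeasurableSpace Ω] {P : Measure Ω} {α : ℝ}
  {L : Ω → List (Vtx d) → ℕ}

lemma sub_inj (x : Vtx d) : Function.Injective (fun v : Vtx d => v - x) :=
  fun a b h => by simpa using congrArg (· + x) h

lemma getD_map_sub (x : Vtx d) (l : List (Vtx d)) {i : ℕ} (hi : i < l.length) :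
    (l.map (fun v => v - x)).getD i 0 = l.getD i 0 - x := by
  rw [List.getD_eq_getElem _ _ (by simpa using hi), List.getD_eq_getElem _ _ hi,
    List.getElem_map]

lemma Qd_sub (x : Vtx d) (a b : Vtx d) : Qd d (a - x) (b - x) = Qd d a b := by
  simp [Qd, Pi.sub_apply, sub_sub_sub_cancel_right]

lemma isLoop_map_sub (x : Vtx d) (l : List (Vtx d)) :
    IsLoop (l.map (fun v => v - x)) ↔ IsLoop l := by
  have key : ∀ (y : Vtx d) (m : List (Vtx d)), IsLoop m → IsLoop (m.map (fun v => v - y)) := by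
    rintro y m ⟨hlen, h⟩
    refine ⟨by simpa using hlen, ?_⟩
    intro i hi
    rw [List.length_map] at hi
    have hi' : (i + 1) % m.length < m.length := Nat.mod_lt _ (by omega)
    rw [List.length_map, getD_map_sub _ _ hi, getD_map_sub _ _ hi']
    exact fun hc => h i hi (sub_inj y hc)
  constructor
  · intro h
    have := key (-x) _ h
    simpa [List.map_map, Function.comp_def, sub_sub, List.map_id'] using this
  · exact key x l

lemma loopWeight_map_sub (x : Vtx d) (l : List (Vtx d)) :
    loopWeight d (l.map (fun v => v - x)) = loopWeight d l := by
  rcases Nat.eq_zero_or_pos l.length with h0 | hpos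
  · rw [List.length_eq_zero_iff] at h0; subst h0; rfl
  · unfold loopWeight
    rw [List.length_map]
    congr 1
    refine Finset.prod_congr rfl fun i hi => ?_
    rw [Finset.mem_range] at hi
    have hi' : (i + 1) % l.length < l.length := Nat.mod_lt _ hpos
    rw [getD_map_sub _ _ hi, getD_map_sub _ _ hi', Qd_sub]

/-- marginal pmf of the coordinate `l`. -/
def pmf0 (d : ℕ) (α : ℝ) (l : List (Vtx d)) (n : ℕ) : ENNReal :=
  if IsLoop l then
    ENNReal.ofReal
      (Real.exp (-(α * loopWeight d l)) * (α * loopWeight d l) ^ n / (Nat.factorial n : ℝ))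
  else if n = 0 then 1 else 0

lemma marginal (hL : IsPoissonLoopSoup d P α L) [IsProbabilityMeasure P]
    (l : List (Vtx d)) (n : ℕ) : P {ω | L ω l = n} = pmf0 d α l n := by
  by_cases h : IsLoop l
  · rw [hL.2.2.1 l h n]; simp [pmf0, h]
  · have hz := hL.2.2.2 l h
    rcases n with _ | n
    · have : {ω | L ω l = 0} = Set.univ := Set.eq_univ_of_forall fun ω => hz ω
      rw [this, measure_univ]; simp [pmf0, h]
    · have : {ω | L ω l = n + 1} = ∅ := by
        ext ω; simp [hz ω]
      rw [this, measure_empty]; simp [pmf0, h]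

lemma findim (hL : IsPoissonLoopSoup d P α L) [IsProbabilityMeasure P]
    (s : Finset (List (Vtx d))) (g : List (Vtx d) → ℕ) :
    P (⋂ l ∈ s, (fun ω => L ω l) ⁻¹' {g l}) = ∏ l ∈ s, pmf0 d α l (g l) := by
  rw [hL.2.1.measure_inter_preimage_eq_mul s (fun _ _ => MeasurableSpace.measurableSet_top)]
  refine Finset.prod_congr rfl fun l _ => ?_
  have : (fun ω => L ω l) ⁻¹' {g l} = {ω | L ω l = g l} := rfl
  rw [this, marginal hL]

lemma map_cylinder (hL : IsPoissonLoopSoup d P α L) [IsProbabilityMeasure P]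
    (hLm : Measurable L) (s : Finset (List (Vtx d))) (S : Set (∀ l : s, ℕ)) :
    (P.map L) (cylinder s S)
      = ∑' g : S, ∏ l ∈ s.attach, pmf0 d α l.1 (g.1 l) := by
  haveI : Countable ↥S := (Set.to_countable S).to_subtype
  have hS : MeasurableSet S := (Set.to_countable S).measurableSet
  rw [Measure.map_apply hLm (MeasurableSet.cylinder s hS)]
  have hdecomp : L ⁻¹' cylinder s S = ⋃ g : S, L ⁻¹' cylinder s {g.1} := by
    ext ω
    simp only [Set.mem_preimage, mem_cylinder, Set.mem_iUnion, Set.mem_singleton_iff]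
    exact ⟨fun h => ⟨⟨_, h⟩, rfl⟩, by rintro ⟨g, hg⟩; rw [hg]; exact g.2⟩
  rw [hdecomp, measure_iUnion ?_ ?_]
  · refine tsum_congr fun g => ?_
    set g' : List (Vtx d) → ℕ := fun l => if h : l ∈ s then g.1 ⟨l, h⟩ else 0 with hg'
    have heq : L ⁻¹' cylinder s {g.1} = ⋂ l ∈ s, (fun ω => L ω l) ⁻¹' {g' l} := by
      ext ω
      simp only [Set.mem_preimage, mem_cylinder, Set.mem_singleton_iff, Set.mem_iInter,
        funext_iff]
      constructor
      · intro h l hl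
        have := h ⟨l, hl⟩
        simpa [Finset.restrict, hg', hl] using this
      · intro h l
        have := h l.1 l.2
        simpa [Finset.restrict, hg', l.2] using this
    rw [heq, findim hL, ← Finset.prod_attach]
    refine Finset.prod_congr rfl fun l _ => ?_
    simp [hg', l.2]
  · intro g g' hne
    refine Set.disjoint_left.2 fun ω h1 h2 => hne ?_
    simp only [Set.mem_preimage, mem_cylinder, Set.mem_singleton_iff] at h1 h2
    exact Subtype.ext (h1 ▸ h2 ▸ rfl)
  · intro g
    exact hLm (MeasurableSet.cylinder s (measurableSet_singleton _))

lemma law_eq {Ω' : Type*} [MeasurableSpace Ω'] {P' : Measure Ω'}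
    {L' : Ω' → List (Vtx d) → ℕ}
    (hL : IsPoissonLoopSoup d P α L) (hLm : Measurable L)
    (hL' : IsPoissonLoopSoup d P' α L') (hLm' : Measurable L') :
    P.map L = P'.map L' := by
  haveI : IsProbabilityMeasure P := hL.2.1.isProbabilityMeasure
  haveI : IsProbabilityMeasure P' := hL'.2.1.isProbabilityMeasure
  haveI : IsProbabilityMeasure (P.map L) := Measure.isProbabilityMeasure_map hLm.aemeasurable
  haveI : IsProbabilityMeasure (P'.map L') := Measure.isProbabilityMeasure_map hLm'.aemeasurable
  refine ext_of_generate_finite (measurableCylinders _)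
    generateFrom_measurableCylinders.symm isPiSystem_measurableCylinders ?_
    (by simp [measure_univ])
  intro t ht
  obtain ⟨s, S, hS, rfl⟩ := (mem_measurableCylinders t).1 ht
  rw [map_cylinder hL hLm, map_cylinder hL' hLm']

lemma map_add_map_sub (x : Vtx d) (l : List (Vtx d)) :
    ((l.map (fun v => v - x)).map (fun v => v + x)) = l := by
  rw [List.map_map]
  simpa [Function.comp_def] using List.map_id l

lemma shiftConfig_measurable (x : Vtx d) : Measurable (shiftConfig d x) :=
  measurable_pi_lambda _ fun _ => measurable_pi_apply _

lemma shift_soup (hL : IsPoissonLoopSoup d P α L) (x : Vtx d) :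
    IsPoissonLoopSoup d P α (fun ω => shiftConfig d x (L ω)) := by
  set e : List (Vtx d) → List (Vtx d) := fun l => l.map (fun v => v - x) with he
  have einj : Function.Injective e := List.map_injective_iff.2 (sub_inj x)
  refine ⟨fun l => hL.1 (e l), ?_, ?_, ?_⟩
  · rw [ProbabilityTheory.iIndepFun_iff_measure_inter_preimage_eq_mul]
    intro S sets _
    set sets' : List (Vtx d) → Set ℕ := fun m => sets (m.map (fun v => v + x)) with hs'
    have hkey : ∀ l, sets' (e l) = sets l := fun l => by
      simp only [hs', he, map_add_map_sub]
    have h1 : (⋂ l ∈ S, (fun ω => shiftConfig d x (L ω) l) ⁻¹' sets l)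
        = ⋂ m ∈ S.image e, (fun ω => L ω m) ⁻¹' sets' m := by
      ext ω
      simp only [Set.mem_iInter, Finset.mem_image]
      constructor
      · rintro h m ⟨l, hl, rfl⟩
        rw [hkey]; exact h l hl
      · intro h l hl
        have := h (e l) ⟨l, hl, rfl⟩
        rwa [hkey] at this
    rw [h1, hL.2.1.measure_inter_preimage_eq_mul (S.image e)
      (fun _ _ => MeasurableSpace.measurableSet_top),
      Finset.prod_image (fun a _ b _ hab => einj hab)]
    refine Finset.prod_congr rfl fun l _ => ?_
    rw [hkey]
    rfl
  · intro l hl n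
    have h' : IsLoop (e l) := (isLoop_map_sub x l).2 hl
    have := hL.2.2.1 (e l) h' n
    rw [loopWeight_map_sub] at this
    exact this
  · intro l hl ω
    exact hL.2.2.2 (e l) (fun h => hl ((isLoop_map_sub x l).1 h)) ω

end LoopAux

/-- The Poisson loop ensemble on `ℤ^d` (viewed as the law `ν` of the loop
configuration on the configuration space) is invariant under all lattice shifts, and ergodic:
every measurable shift-invariant event has probability `0` or `1`. -/
theorem loop_soup_translation_invariant_ergodic (d : ℕ) (α : ℝ) (hα : 0 < α)
    {Ω : Type*} [MeasurableSpace Ω] (P : Measure Ω) [IsProbabilityMeasure P]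
    (L : Ω → List (Vtx d) → ℕ) (hL : IsPoissonLoopSoup d P α L)
    (hLmeas : Measurable L) :
    (∀ x : Vtx d, (P.map L).map (shiftConfig d x) = P.map L) ∧
    (∀ A : Set (List (Vtx d) → ℕ), MeasurableSet A →
      (∀ x : Vtx d, shiftConfig d x ⁻¹' A = A) →
      (P.map L) A = 0 ∨ (P.map L) A = 1) := by
  classical
  open LoopAux in
  have hinv : ∀ x : Vtx d, (P.map L).map (shiftConfig d x) = P.map L := by
    intro x
    rw [Measure.map_map (LoopAux.shiftConfig_measurable x) hLmeas]
    exact LoopAux.law_eq (LoopAux.shift_soup hL x)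
      ((LoopAux.shiftConfig_measurable x).comp hLmeas) hL hLmeas
  refine ⟨hinv, ?_⟩
  intro A hAmeas hAinv
  set ν := P.map L with hν
  haveI : IsProbabilityMeasure ν := Measure.isProbabilityMeasure_map hLmeas.aemeasurable
  have hinvC : ∀ (x : Vtx d) (C : Set (List (Vtx d) → ℕ)), MeasurableSet C →
      ν (shiftConfig d x ⁻¹' C) = ν C := by
    intro x C hC
    rw [← Measure.map_apply (LoopAux.shiftConfig_measurable x) hC, hν, hinv x]
  -- the set of configurations vanishing on non-loops has full measure
  set T : Set (List (Vtx d) → ℕ) :=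
    ⋂ (l : List (Vtx d)) (_ : ¬ IsLoop l), (fun c => c l) ⁻¹' {0} with hTdef
  have hTmeas : MeasurableSet T :=
    MeasurableSet.iInter fun l => MeasurableSet.iInter fun _ =>
      measurable_pi_apply l (measurableSet_singleton 0)
  have hTc : ν Tᶜ = 0 := by
    rw [hν, Measure.map_apply hLmeas hTmeas.compl]
    have : L ⁻¹' Tᶜ = ∅ := by
      refine Set.eq_empty_iff_forall_notMem.2 fun ω hω => hω ?_
      exact Set.mem_iInter₂.2 fun l hl => hL.2.2.2 l hl ω
    rw [this, measure_empty]
  have hdense : ν.MeasureDense (measurableCylinders (fun _ : List (Vtx d) => ℕ)) :=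
    Measure.MeasureDense.of_generateFrom_isSetAlgebra_finite ν
      ⟨empty_mem_measurableCylinders _, fun u hu => compl_mem_measurableCylinders hu,
       fun u v hu hv => union_mem_measurableCylinders hu hv⟩
      generateFrom_measurableCylinders.symm
  -- key quantitative estimate
  have key : ∀ ε : ℝ, 0 < ε → ε ≤ 1 →
      ν A ≤ ν A * ν A + 5 * ENNReal.ofReal ε ∧
      ν A * ν A ≤ ν A + 5 * ENNReal.ofReal ε := by
    intro ε hε hε1
    set δ := ENNReal.ofReal ε with hδdef
    have hδ1 : δ ≤ 1 := by
      rw [hδdef, ← ENNReal.ofReal_one]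
      exact ENNReal.ofReal_le_ofReal hε1
    obtain ⟨B, hBmem, hAB⟩ := hdense.approx A hAmeas (measure_ne_top ν A) ε hε
    obtain ⟨s, S, hSmeas, rfl⟩ := (mem_measurableCylinders B).1 hBmem
    -- purify the cylinder so that it only involves loop coordinates
    set s₀ : Finset (List (Vtx d)) := s.filter (fun l => IsLoop l) with hs₀def
    set r : (∀ l : s₀, ℕ) → (∀ l : s, ℕ) := fun g l =>
      if h : IsLoop l.1 then g ⟨l.1, Finset.mem_filter.2 ⟨l.2, h⟩⟩ else 0 with hrdef
    set S₀ : Set (∀ l : s₀, ℕ) := r ⁻¹' S with hS₀def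
    set B₀ : Set (List (Vtx d) → ℕ) := cylinder s₀ S₀ with hB₀def
    have hrmeas : Measurable r := by
      refine measurable_pi_lambda _ (fun l => ?_)
      by_cases h : IsLoop l.1
      · simp only [hrdef, dif_pos h]; exact measurable_pi_apply _
      · simp only [hrdef, dif_neg h]; exact measurable_const
    have hS₀meas : MeasurableSet S₀ := hrmeas hSmeas
    have hB₀meas : MeasurableSet B₀ := MeasurableSet.cylinder s₀ hS₀meas
    have hmemT : ∀ c ∈ T, (c ∈ cylinder s S ↔ c ∈ B₀) := by
      intro c hc
      have hrc : r (s₀.restrict c) = s.restrict c := by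
        funext l
        by_cases h : IsLoop l.1
        · simp only [hrdef, dif_pos h]; rfl
        · simp only [hrdef, dif_neg h]
          have h0 : c l.1 = 0 := Set.mem_iInter₂.1 hc l.1 h
          simp [Finset.restrict, h0]
      rw [hB₀def, mem_cylinder, mem_cylinder, hS₀def, Set.mem_preimage, hrc]
    have hsub : symmDiff (cylinder s S) B₀ ⊆ Tᶜ := by
      intro c hc hcT
      rw [Set.mem_symmDiff] at hc
      have := hmemT c hcT
      tauto
    have hAB₀ : ν (symmDiff A B₀) ≤ δ := by
      calc ν (symmDiff A B₀)
          ≤ ν (symmDiff A (cylinder s S) ∪ symmDiff (cylinder s S) B₀) :=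
            measure_mono (symmDiff_triangle _ _ _)
        _ ≤ ν (symmDiff A (cylinder s S)) + ν (symmDiff (cylinder s S) B₀) :=
            measure_union_le _ _
        _ ≤ δ + 0 := add_le_add hAB.le (measure_mono_null hsub hTc).le
        _ = δ := by rw [add_zero]
    -- choose a shift taking the loop coordinates off themselves
    obtain ⟨x, hdisj⟩ :
        ∃ x : Vtx d, Disjoint s₀ (s₀.image (fun l => l.map (fun v => v - x))) := by
      rcases Finset.eq_empty_or_nonempty s₀ with h | ⟨l₀, hl₀⟩
      · exact ⟨0, by simp [h]⟩
      · have hloop₀ : IsLoop l₀ := (Finset.mem_filter.1 hl₀).2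
        have hlen₀ : 2 ≤ l₀.length := hloop₀.1
        have hne01 : l₀.getD 0 0 ≠ l₀.getD 1 0 := by
          have := hloop₀.2 0 (by omega)
          rwa [Nat.zero_add, Nat.mod_eq_of_lt (by omega)] at this
        haveI : Nonempty (Fin d) := by
          by_contra h
          rw [not_nonempty_iff] at h
          exact hne01 (funext fun i => (h.false i).elim)
        haveI : Infinite (Vtx d) :=
          Infinite.of_injective (fun z : ℤ => (fun _ => z : Vtx d))
            (fun z z' h => congrFun h (Classical.arbitrary _))
        obtain ⟨x, hx⟩ := Infinite.exists_notMem_finset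
          ((s₀ ×ˢ s₀).image (fun p => p.1.getD 0 0 - p.2.getD 0 0))
        refine ⟨x, Finset.disjoint_left.2 fun m hm hm' => ?_⟩
        obtain ⟨l, hl, rfl⟩ := Finset.mem_image.1 hm'
        have hlloop : IsLoop l := (Finset.mem_filter.1 hl).2
        have hpos : 0 < l.length := by have := hlloop.1; omega
        apply hx
        refine Finset.mem_image.2
          ⟨(l, l.map (fun v => v - x)), Finset.mem_product.2 ⟨hl, hm⟩, ?_⟩
        rw [LoopAux.getD_map_sub x l hpos]
        exact sub_sub_cancel _ _
    -- independence of the two cylinder events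
    set e : List (Vtx d) → List (Vtx d) := fun l => l.map (fun v => v - x) with hedef
    set t : Finset (List (Vtx d)) := s₀.image e with htdef
    have hIndep := hL.2.1.indepFun_finset s₀ t hdisj hL.1
    set φ : (∀ m : t, ℕ) → (∀ l : s₀, ℕ) :=
      fun h l => h ⟨e l.1, Finset.mem_image_of_mem e l.2⟩ with hφdef
    have hφmeas : Measurable φ := measurable_pi_lambda _ fun l => measurable_pi_apply _
    set S₁ : Set (∀ m : t, ℕ) := φ ⁻¹' S₀ with hS₁def
    have hS₁meas : MeasurableSet S₁ := hφmeas hS₀meas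
    have hprod := hIndep.measure_inter_preimage_eq_mul S₀ S₁ hS₀meas hS₁meas
    have hXB : L ⁻¹' B₀ = (fun ω (l : s₀) => L ω l.1) ⁻¹' S₀ := rfl
    have hYB : L ⁻¹' (shiftConfig d x ⁻¹' B₀) = (fun ω (m : t) => L ω m.1) ⁻¹' S₁ := rfl
    have hshB : MeasurableSet (shiftConfig d x ⁻¹' B₀) :=
      LoopAux.shiftConfig_measurable x hB₀meas
    have hshinv : ν (shiftConfig d x ⁻¹' B₀) = ν B₀ := hinvC x B₀ hB₀meas
    have hprodν : ν (B₀ ∩ shiftConfig d x ⁻¹' B₀) = ν B₀ * ν B₀ := by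
      rw [hν, Measure.map_apply hLmeas (hB₀meas.inter hshB), Set.preimage_inter,
        hXB, hYB, hprod, ← hXB, ← hYB, ← Measure.map_apply hLmeas hB₀meas,
        ← Measure.map_apply hLmeas hshB, ← hν, hshinv]
    -- measure estimates
    have step1 : ∀ C D : Set (List (Vtx d) → ℕ), ν C ≤ ν D + ν (symmDiff C D) := by
      intro C D
      refine (measure_mono fun c hc => ?_).trans (measure_union_le D (symmDiff C D))
      by_cases h : c ∈ D
      · exact Or.inl h
      · exact Or.inr (Set.mem_symmDiff.2 (Or.inl ⟨hc, h⟩))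
    have hshAB : ν (symmDiff (shiftConfig d x ⁻¹' A) (shiftConfig d x ⁻¹' B₀)) ≤ δ := by
      rw [← Set.preimage_symmDiff, hinvC x _ (hAmeas.symmDiff hB₀meas)]
      exact hAB₀
    have hsub2 : symmDiff (A ∩ shiftConfig d x ⁻¹' A) (B₀ ∩ shiftConfig d x ⁻¹' B₀)
        ⊆ symmDiff A B₀ ∪ symmDiff (shiftConfig d x ⁻¹' A) (shiftConfig d x ⁻¹' B₀) := by
      intro c hc
      simp only [Set.mem_symmDiff, Set.mem_union, Set.mem_inter_iff] at hc ⊢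
      tauto
    have hdist : ν (symmDiff (A ∩ shiftConfig d x ⁻¹' A) (B₀ ∩ shiftConfig d x ⁻¹' B₀))
        ≤ 2 * δ := by
      refine (measure_mono hsub2).trans ((measure_union_le _ _).trans ?_)
      rw [two_mul]
      exact add_le_add hAB₀ hshAB
    have hAofAA : ν (A ∩ shiftConfig d x ⁻¹' A) = ν A := by rw [hAinv x, Set.inter_self]
    have hb_le : ν B₀ ≤ ν A + δ := by
      refine (step1 B₀ A).trans ?_
      rw [symmDiff_comm]
      exact add_le_add le_rfl hAB₀
    have ha_le : ν A ≤ ν B₀ + δ := (step1 A B₀).trans (add_le_add le_rfl hAB₀)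
    have h1 : ν A ≤ ν B₀ * ν B₀ + 2 * δ := by
      calc ν A = ν (A ∩ shiftConfig d x ⁻¹' A) := hAofAA.symm
        _ ≤ ν (B₀ ∩ shiftConfig d x ⁻¹' B₀)
            + ν (symmDiff (A ∩ shiftConfig d x ⁻¹' A) (B₀ ∩ shiftConfig d x ⁻¹' B₀)) :=
          step1 _ _
        _ ≤ ν B₀ * ν B₀ + 2 * δ := by rw [hprodν]; exact add_le_add le_rfl hdist
    have h2 : ν B₀ * ν B₀ ≤ ν A + 2 * δ := by
      calc ν B₀ * ν B₀ = ν (B₀ ∩ shiftConfig d x ⁻¹' B₀) := hprodν.symm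
        _ ≤ ν (A ∩ shiftConfig d x ⁻¹' A)
            + ν (symmDiff (B₀ ∩ shiftConfig d x ⁻¹' B₀) (A ∩ shiftConfig d x ⁻¹' A)) :=
          step1 _ _
        _ ≤ ν A + 2 * δ := by
          rw [hAofAA, symmDiff_comm]
          exact add_le_add le_rfl hdist
    have hA1 : ν A ≤ 1 := prob_le_one
    have hB1 : ν B₀ ≤ 1 := prob_le_one
    constructor
    · calc ν A ≤ ν B₀ * ν B₀ + 2 * δ := h1
        _ ≤ (ν A + δ) * (ν A + δ) + 2 * δ := by gcongr
        _ = ν A * ν A + (ν A * δ + δ * ν A + δ * δ) + 2 * δ := by ring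
        _ ≤ ν A * ν A + (1 * δ + δ * 1 + δ * 1) + 2 * δ := by gcongr
        _ = ν A * ν A + 5 * δ := by ring
    · calc ν A * ν A ≤ (ν B₀ + δ) * (ν B₀ + δ) := by gcongr
        _ = ν B₀ * ν B₀ + (ν B₀ * δ + δ * ν B₀ + δ * δ) := by ring
        _ ≤ (ν A + 2 * δ) + (1 * δ + δ * 1 + δ * 1) := by gcongr
        _ = ν A + 5 * δ := by ring
  -- conclude ν A = ν A * ν A
  have hane : ν A ≠ ⊤ := measure_ne_top ν A
  have hbound : ∀ η : NNReal, 0 < η →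
      5 * ENNReal.ofReal (min ((η : ℝ) / 5) 1) ≤ (η : ENNReal) := by
    intro η hη
    have h5 : (5 : ENNReal) = ENNReal.ofReal (5 : ℝ) := by
      rw [ENNReal.ofReal_ofNat]
    rw [h5, ← ENNReal.ofReal_mul (by norm_num)]
    have hle : (5 : ℝ) * min ((η : ℝ) / 5) 1 ≤ (η : ℝ) := by
      have := min_le_left ((η : ℝ) / 5) 1
      nlinarith
    exact (ENNReal.ofReal_le_ofReal hle).trans (by rw [ENNReal.ofReal_coe_nnreal])
  have hgoal1 : ν A ≤ ν A * ν A := by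
    refine ENNReal.le_of_forall_pos_le_add fun η hη hfin => ?_
    have hε : 0 < min ((η : ℝ) / 5) 1 := lt_min (by positivity) one_pos
    obtain ⟨hk, -⟩ := key _ hε (min_le_right _ _)
    exact hk.trans (add_le_add le_rfl (hbound η hη))
  have hgoal2 : ν A * ν A ≤ ν A := by
    refine ENNReal.le_of_forall_pos_le_add fun η hη hfin => ?_
    have hε : 0 < min ((η : ℝ) / 5) 1 := lt_min (by positivity) one_pos
    obtain ⟨-, hk⟩ := key _ hε (min_le_right _ _)
    exact hk.trans (add_le_add le_rfl (hbound η hη))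
  have heq : ν A = ν A * ν A := le_antisymm hgoal1 hgoal2
  rcases eq_or_ne (ν A) 0 with h0 | h0
  · exact Or.inl h0
  · right
    have h1' : ν A * 1 = ν A * ν A := by rw [mul_one]; exact heq
    exact ((ENNReal.mul_right_inj h0 hane).1 h1').symm

end
end
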